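/- Let C_rr > 4, r_± = 1/2 ± √(1/4 − 1/C_rr), and let M satisfy r_− < M < r_+. Define g : (0,1) → ℝ by g(r) = r − M + (1/C_rr) log( M(1−r) / (r(1−M)) ). Then g(M) = 0 and g'(M) > 0, and g has exactly two further zeros r̲ and r̄ in (0,1), which satisfy 0 < r̲ < r_− and r_+ < r̄ < 1; that is, the zero set of g in (0,1) is exactly {r̲, M, r̄}. -/

import Mathlib

open Real Set


set_option maxHeartbeats 2000000 in
/-- **Zero set of the steady-state nonlinearity.** For `C_rr > 4`,
`r_± = 1/2 ± √(1/4 - 1/C_rr)` and mass `M` with `r_- < M < r_+`, the nonlinearity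
`g(r) = r - M + (1/C_rr) log(M(1-r)/(r(1-M)))` satisfies `g(M) = 0`, `g'(M) > 0`, and
`g` has exactly two further zeros `r̲ < r_-` and `r̄ > r_+` in `(0,1)`: the zero set of
`g` in `(0,1)` is exactly `{r̲, M, r̄}`. -/
theorem g_zero_set (M C_rr : ℝ) (hC : 4 < C_rr)
    (hMm : 1 / 2 - Real.sqrt (1 / 4 - 1 / C_rr) < M)
    (hMp : M < 1 / 2 + Real.sqrt (1 / 4 - 1 / C_rr)) :
    let g : ℝ → ℝ := fun r => r - M + (1 / C_rr) * Real.log (M * (1 - r) / (r * (1 - M)))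
    g M = 0 ∧
      HasDerivAt g (1 - 1 / (C_rr * (M * (1 - M)))) M ∧
      0 < 1 - 1 / (C_rr * (M * (1 - M))) ∧
      ∃ rlow rbar : ℝ,
        0 < rlow ∧ rlow < 1 / 2 - Real.sqrt (1 / 4 - 1 / C_rr) ∧
        1 / 2 + Real.sqrt (1 / 4 - 1 / C_rr) < rbar ∧ rbar < 1 ∧
        {r ∈ Set.Ioo (0 : ℝ) 1 | g r = 0} = {rlow, M, rbar} := by
  intro g
  have hC0 : (0:ℝ) < C_rr := by linarith
  have hd : (0:ℝ) < 1 / 4 - 1 / C_rr := by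
    have h1 : 1 / C_rr < 1 / 4 := by
      rw [div_lt_div_iff₀ hC0 (by norm_num)]; linarith
    linarith
  set s := Real.sqrt (1 / 4 - 1 / C_rr) with hs
  have hs0 : 0 < s := Real.sqrt_pos.mpr hd
  have hs2 : s ^ 2 = 1 / 4 - 1 / C_rr := Real.sq_sqrt hd.le
  have hsh : s < 1 / 2 := by nlinarith [one_div_pos.mpr hC0]
  set rm : ℝ := 1 / 2 - s with hrm
  set rp : ℝ := 1 / 2 + s with hrp
  have hrm0 : 0 < rm := by rw [hrm]; linarith
  have hrm1 : rm < 1 := by rw [hrm]; linarith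
  have hrp0 : 0 < rp := by rw [hrp]; linarith
  have hrp1 : rp < 1 := by rw [hrp]; linarith
  have hrmrp : rm < rp := by rw [hrm, hrp]; linarith
  have hquad : ∀ x : ℝ, x * (1 - x) - 1 / C_rr = -((x - rm) * (x - rp)) := by
    intro x; rw [hrm, hrp]; linear_combination -hs2
  have hM0 : 0 < M := lt_trans hrm0 hMm
  have hM1 : M < 1 := lt_trans hMp hrp1
  have hM1' : 0 < 1 - M := by linarith
  have hMIoo : M ∈ Ioo (0:ℝ) 1 := ⟨hM0, hM1⟩
  -- the shifted function F
  set F : ℝ → ℝ := fun r => r - (1 / C_rr) * Real.log r + (1 / C_rr) * Real.log (1 - r)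
    with hF
  have hgh : ∀ r ∈ Ioo (0:ℝ) 1, g r = F r - F M := by
    rintro r ⟨hr0, hr1⟩
    have h1r : (0:ℝ) < 1 - r := by linarith
    show r - M + (1 / C_rr) * Real.log (M * (1 - r) / (r * (1 - M))) = F r - F M
    rw [hF]
    rw [Real.log_div (mul_ne_zero hM0.ne' h1r.ne') (mul_ne_zero hr0.ne' hM1'.ne'),
      Real.log_mul hM0.ne' h1r.ne', Real.log_mul hr0.ne' hM1'.ne']
    ring
  -- derivative of F
  have hDF : ∀ r ∈ Ioo (0:ℝ) 1, HasDerivAt F (1 - 1 / (C_rr * (r * (1 - r)))) r := by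
    rintro r ⟨hr0, hr1⟩
    have h1r : (0:ℝ) < 1 - r := by linarith
    have H1 : HasDerivAt Real.log r⁻¹ r := Real.hasDerivAt_log hr0.ne'
    have H2 : HasDerivAt (fun x : ℝ => Real.log (1 - x)) (-(1 - r)⁻¹) r := by
      have hb : HasDerivAt (fun x : ℝ => 1 - x) (-1) r := by
        exact (hasDerivAt_id' r).const_sub 1
      have := (Real.hasDerivAt_log h1r.ne').comp r hb
      rw [show -(1 - r)⁻¹ = (1 - r)⁻¹ * -1 by ring]; exact this
    have H : HasDerivAt F (1 - (1 / C_rr) * r⁻¹ + (1 / C_rr) * (-(1 - r)⁻¹)) r := by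
      rw [hF]
      exact ((hasDerivAt_id r).sub (H1.const_mul _)).add (H2.const_mul _)
    convert H using 1
    field_simp
    ring
  -- continuity on subsets of (0,1)
  have hFc : ∀ t : Set ℝ, t ⊆ Ioo (0:ℝ) 1 → ContinuousOn F t := fun t ht x hx =>
    ((hDF x (ht hx)).continuousAt).continuousWithinAt
  have hgM0 : g M = 0 := by
    rw [hgh M hMIoo]; ring
  clear_value g s rm rp F
  have hsub1 : Ioc (0:ℝ) rm ⊆ Ioo (0:ℝ) 1 := fun x hx => ⟨hx.1, lt_of_le_of_lt hx.2 hrm1⟩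
  have hsub2 : Icc rm rp ⊆ Ioo (0:ℝ) 1 := Set.Icc_subset_Ioo hrm0 hrp1
  have hsub3 : Ico rp (1:ℝ) ⊆ Ioo (0:ℝ) 1 := fun x hx => ⟨lt_of_lt_of_le hrp0 hx.1, hx.2⟩
  -- derivative signs
  have hderiv_neg : ∀ x ∈ Ioo (0:ℝ) 1, (x < rm ∨ rp < x) → deriv F x < 0 := by
    rintro x hx hcase
    rw [(hDF x hx).deriv]
    have hxx : 0 < x * (1 - x) := mul_pos hx.1 (by linarith [hx.2])
    have hxlt : x * (1 - x) < 1 / C_rr := by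
      have hq := hquad x
      rcases hcase with h | h
      · nlinarith [mul_pos (sub_pos.mpr h) (sub_pos.mpr (lt_trans h hrmrp))]
      · nlinarith [mul_pos (sub_pos.mpr (lt_trans hrmrp h)) (sub_pos.mpr h)]
    have hlt : C_rr * (x * (1 - x)) < 1 := by
      have := mul_lt_mul_of_pos_left hxlt hC0
      rwa [mul_one_div_cancel hC0.ne'] at this
    have := one_lt_one_div (mul_pos hC0 hxx) hlt
    linarith
  have hderiv_pos : ∀ x ∈ Ioo rm rp, 0 < deriv F x := by
    rintro x ⟨h1, h2⟩
    have hx : x ∈ Ioo (0:ℝ) 1 := ⟨lt_trans hrm0 h1, lt_trans h2 hrp1⟩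
    rw [(hDF x hx).deriv]
    have hxx : 0 < x * (1 - x) := mul_pos hx.1 (by linarith [hx.2])
    have hxgt : 1 / C_rr < x * (1 - x) := by
      have hq := hquad x
      nlinarith [mul_pos (sub_pos.mpr h1) (sub_pos.mpr h2)]
    have hgt : 1 < C_rr * (x * (1 - x)) := by
      have := mul_lt_mul_of_pos_left hxgt hC0
      rwa [mul_one_div_cancel hC0.ne'] at this
    have : 1 / (C_rr * (x * (1 - x))) < 1 := (div_lt_one (by positivity)).mpr hgt
    linarith
  -- monotonicity on the three intervals
  have anti_left : StrictAntiOn F (Ioc (0:ℝ) rm) := by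
    apply strictAntiOn_of_deriv_neg (convex_Ioc _ _) (hFc _ hsub1)
    intro x hx
    rw [interior_Ioc] at hx
    exact hderiv_neg x ⟨hx.1, lt_trans hx.2 hrm1⟩ (Or.inl hx.2)
  have mono_mid : StrictMonoOn F (Icc rm rp) := by
    apply strictMonoOn_of_deriv_pos (convex_Icc _ _) (hFc _ hsub2)
    intro x hx
    rw [interior_Icc] at hx
    exact hderiv_pos x hx
  have anti_right : StrictAntiOn F (Ico rp (1:ℝ)) := by
    apply strictAntiOn_of_deriv_neg (convex_Ico _ _) (hFc _ hsub3)
    intro x hx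
    rw [interior_Ico] at hx
    exact hderiv_neg x ⟨lt_trans hrp0 hx.1, hx.2⟩ (Or.inr hx.1)
  have hFrmM : F rm < F M :=
    mono_mid ⟨le_refl _, hrmrp.le⟩ ⟨hMm.le, hMp.le⟩ hMm
  have hFMrp : F M < F rp :=
    mono_mid ⟨hMm.le, hMp.le⟩ ⟨hrmrp.le, le_refl _⟩ hMp
  set z := F M with hz
  clear_value z
  have hc : (0:ℝ) < 1 / C_rr := one_div_pos.mpr hC0
  have hlog2 : Real.log (1/2 : ℝ) = -Real.log 2 := by
    rw [one_div, Real.log_inv]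
  -- existence of rlow
  have hexlow : ∃ rlow, 0 < rlow ∧ rlow < rm ∧ F rlow = z := by
    set a : ℝ := min (rm / 2) (Real.exp (-(C_rr * z) - Real.log 2)) with ha
    clear_value a
    have ha0 : 0 < a := by rw [ha]; exact lt_min (by linarith) (Real.exp_pos _)
    have ham : a < rm := by rw [ha]; exact lt_of_le_of_lt (min_le_left _ _) (by linarith)
    have hahalf : a ≤ 1/2 := by
      rw [ha]; exact le_trans (min_le_left _ _) (by rw [hrm]; linarith)
    have hloga : Real.log a ≤ -(C_rr * z) - Real.log 2 := by
      calc Real.log a ≤ Real.log (Real.exp (-(C_rr * z) - Real.log 2)) :=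
            Real.log_le_log ha0 (by rw [ha]; exact min_le_right _ _)
        _ = -(C_rr * z) - Real.log 2 := Real.log_exp _
    have hlog1a : -Real.log 2 ≤ Real.log (1 - a) := by
      rw [← hlog2]
      exact Real.log_le_log (by norm_num) (by linarith)
    have haF : z ≤ F a := by
      have hmul1 : (1 / C_rr) * Real.log a ≤ (1 / C_rr) * (-(C_rr * z) - Real.log 2) :=
        mul_le_mul_of_nonneg_left hloga hc.le
      have hmul2 : (1 / C_rr) * (-Real.log 2) ≤ (1 / C_rr) * Real.log (1 - a) :=
        mul_le_mul_of_nonneg_left hlog1a hc.le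
      have hcc : (1 / C_rr) * (-(C_rr * z) - Real.log 2) = -z - (1 / C_rr) * Real.log 2 := by
        field_simp
      have hFa : F a = a - (1 / C_rr) * Real.log a + (1 / C_rr) * Real.log (1 - a) := by
        rw [hF]
      rw [hFa]
      linarith only [hmul1, hmul2, hcc, ha0]
    have hIcc : Icc a rm ⊆ Ioo (0:ℝ) 1 :=
      Set.Icc_subset_Ioo ha0 hrm1 |>.trans (by intro x hx; exact hx)
    have hmem : z ∈ Icc (F rm) (F a) := ⟨hFrmM.le, haF⟩
    obtain ⟨rl, hrlmem, hrleq⟩ := intermediate_value_Icc' ham.le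
      (hFc _ (Set.Icc_subset_Ioo ha0 hrm1 |>.trans (fun x hx => hx))) hmem
    refine ⟨rl, lt_of_lt_of_le ha0 hrlmem.1, lt_of_le_of_ne hrlmem.2 ?_, hrleq⟩
    intro hcon
    rw [hcon] at hrleq
    exact absurd hrleq (ne_of_lt hFrmM)
  -- existence of rbar
  have hexbar : ∃ rbar, rp < rbar ∧ rbar < 1 ∧ F rbar = z := by
    set em : ℝ := min ((1 - rp) / 2) (Real.exp (C_rr * z - C_rr - Real.log 2)) with hem
    clear_value em
    have hem0 : 0 < em := by rw [hem]; exact lt_min (by linarith) (Real.exp_pos _)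
    set b : ℝ := 1 - em with hb
    clear_value b
    have hb1 : b < 1 := by rw [hb]; linarith
    have hbrp : rp < b := by
      have : em ≤ (1 - rp) / 2 := by rw [hem]; exact min_le_left _ _
      rw [hb]; linarith
    have hbhalf : (1/2 : ℝ) ≤ b := by
      have : (1/2 : ℝ) < rp := by rw [hrp]; linarith
      linarith
    have hlogem : Real.log em ≤ C_rr * z - C_rr - Real.log 2 := by
      calc Real.log em ≤ Real.log (Real.exp (C_rr * z - C_rr - Real.log 2)) :=
            Real.log_le_log hem0 (by rw [hem]; exact min_le_right _ _)
        _ = _ := Real.log_exp _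
    have hlogb : -Real.log 2 ≤ Real.log b := by
      rw [← hlog2]
      exact Real.log_le_log (by norm_num) hbhalf
    have hbF : F b ≤ z := by
      have hmul1 : (1 / C_rr) * Real.log em ≤ (1 / C_rr) * (C_rr * z - C_rr - Real.log 2) :=
        mul_le_mul_of_nonneg_left hlogem hc.le
      have hmul2 : (1 / C_rr) * (-Real.log 2) ≤ (1 / C_rr) * Real.log b :=
        mul_le_mul_of_nonneg_left hlogb hc.le
      have hcc : (1 / C_rr) * (C_rr * z - C_rr - Real.log 2)
          = z - 1 - (1 / C_rr) * Real.log 2 := by field_simp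
      have h1b : 1 - b = em := by rw [hb]; ring
      have hFb : F b = b - (1 / C_rr) * Real.log b + (1 / C_rr) * Real.log (1 - b) := by
        rw [hF]
      rw [hFb, h1b]
      linarith only [hmul1, hmul2, hcc, hb1]
    have hmem : z ∈ Icc (F b) (F rp) := ⟨hbF, hFMrp.le⟩
    obtain ⟨rb, hrbmem, hrbeq⟩ := intermediate_value_Icc' hbrp.le
      (hFc _ (Set.Icc_subset_Ioo hrp0 hb1 |>.trans (fun x hx => hx))) hmem
    refine ⟨rb, lt_of_le_of_ne hrbmem.1 ?_, lt_of_le_of_lt hrbmem.2 hb1, hrbeq⟩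
    intro hcon
    rw [← hcon] at hrbeq
    exact absurd hrbeq (ne_of_gt hFMrp)
  obtain ⟨rlow, hrlow0, hrlowrm, hrloweq⟩ := hexlow
  obtain ⟨rbar, hrbarrp, hrbar1, hrbareq⟩ := hexbar
  have hrlow1 : rlow < 1 := lt_trans hrlowrm hrm1
  -- main conjunction
  refine ⟨?_, ?_, ?_, rlow, rbar, hrlow0, hrlowrm, hrbarrp, hrbar1, ?_⟩
  · -- g M = 0
    exact hgM0
  · -- HasDerivAt g
    have hG : HasDerivAt (fun r => F r - z) (1 - 1 / (C_rr * (M * (1 - M)))) M :=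
      (hDF M hMIoo).sub_const _
    apply hG.congr_of_eventuallyEq
    filter_upwards [isOpen_Ioo.mem_nhds hMIoo] with x hx
    exact hgh x hx
  · -- positivity of derivative
    have hxx : 0 < M * (1 - M) := mul_pos hM0 hM1'
    have hxgt : 1 / C_rr < M * (1 - M) := by
      have hq := hquad M
      nlinarith [mul_pos (sub_pos.mpr hMm) (sub_pos.mpr hMp)]
    have hgt : 1 < C_rr * (M * (1 - M)) := by
      have := mul_lt_mul_of_pos_left hxgt hC0
      rwa [mul_one_div_cancel hC0.ne'] at this
    have : 1 / (C_rr * (M * (1 - M))) < 1 := (div_lt_one (by positivity)).mpr hgt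
    linarith
  · -- the zero set
    ext r
    simp only [Set.mem_setOf_eq, Set.mem_insert_iff, Set.mem_singleton_iff]
    constructor
    · rintro ⟨hr, hg0⟩
      have hFr : F r = z := by
        have := hgh r hr
        rw [hg0] at this
        linarith [this]
      rcases le_or_gt r rm with h1 | h1
      · left
        exact anti_left.injOn ⟨hr.1, h1⟩ ⟨hrlow0, hrlowrm.le⟩ (by rw [hFr, hrloweq])
      · rcases le_or_gt r rp with h2 | h2
        · right; left
          exact mono_mid.injOn ⟨h1.le, h2⟩ ⟨hMm.le, hMp.le⟩ (hFr.trans hz)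
        · right; right
          exact anti_right.injOn ⟨h2.le, hr.2⟩ ⟨hrbarrp.le, hrbar1⟩ (by rw [hFr, hrbareq])
    · rintro (rfl | rfl | rfl)
      · refine ⟨⟨hrlow0, hrlow1⟩, ?_⟩
        rw [hgh r ⟨hrlow0, hrlow1⟩, hrloweq]; ring
      · refine ⟨hMIoo, ?_⟩
        rw [hgh r hMIoo, hz]; ring
      · refine ⟨⟨lt_trans hrp0 hrbarrp, hrbar1⟩, ?_⟩
        rw [hgh r ⟨lt_trans hrp0 hrbarrp, hrbar1⟩, hrbareq]; ring
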